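/- Let p(x) = a_n x^n + ... + a_0 be a complex polynomial of degree n ≥ 1 and let T := max{|||p|||_1, 1}, where |||p|||_1 is the sum of absolute values of the coefficients. Then there exist linear polynomials u_1, ..., u_n ∈ ℂ[x] of degree at most 1 such that p = sgn(a_n) · u_1 · ... · u_n and |||u_i|||_1 ≤ 6 n T for all i. -/

import Mathlib

open Polynomial Finset

noncomputable def l1 (q : Polynomial ℂ) : ℝ := ∑ j ∈ q.support, ‖q.coeff j‖

lemma l1_eq_range (q : Polynomial ℂ) (N : ℕ) (h : q.natDegree < N) :
    l1 q = ∑ j ∈ Finset.range N, ‖q.coeff j‖ := by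
  apply Finset.sum_subset
  · intro j hj
    exact Finset.mem_range.mpr (lt_of_le_of_lt (le_natDegree_of_mem_supp j hj) h)
  · intro j _ hj
    simp [notMem_support_iff.mp hj]

lemma l1_nonneg (q : Polynomial ℂ) : 0 ≤ l1 q :=
  Finset.sum_nonneg fun _ _ => norm_nonneg _

lemma norm_leadingCoeff_le_l1 (q : Polynomial ℂ) (hq : q ≠ 0) :
    ‖q.leadingCoeff‖ ≤ l1 q := by
  have h : q.natDegree ∈ q.support := natDegree_mem_support_of_nonzero hq
  exact Finset.single_le_sum (fun j _ => norm_nonneg _) h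

lemma l1_X_mul (q : Polynomial ℂ) : l1 (X * q) = l1 q := by
  by_cases hq : q = 0
  · simp [hq, l1]
  have h1 : (X * q).natDegree ≤ 1 + q.natDegree := by
    simpa [natDegree_X] using natDegree_mul_le (p := (X : Polynomial ℂ)) (q := q)
  rw [l1_eq_range (X * q) (q.natDegree + 2) (by omega),
    l1_eq_range q (q.natDegree + 1) (Nat.lt_succ_self _),
    Finset.sum_range_succ']
  simp [coeff_X_mul]

lemma key_step (α : ℂ) (q : Polynomial ℂ) :
    (‖α‖ - 1) * l1 q ≤ l1 ((X - C α) * q) := by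
  by_cases hq : q = 0
  · simp [hq, l1]
  set N := q.natDegree + 2 with hN
  have hdq : q.natDegree < N := by omega
  have hdXq : (X * q).natDegree < N := by
    have h1 : (X * q).natDegree ≤ 1 + q.natDegree := by
      simpa [natDegree_X] using natDegree_mul_le (p := (X : Polynomial ℂ)) (q := q)
    omega
  have hdP : ((X - C α) * q).natDegree < N := by
    have h2 := natDegree_mul_le (p := (X - C α)) (q := q)
    have h3 : (X - C α).natDegree = 1 := natDegree_X_sub_C α
    omega
  have hcoeff : ∀ k, ((X - C α) * q).coeff k = (X * q).coeff k - α * q.coeff k := by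
    intro k
    rw [sub_mul, coeff_sub, coeff_C_mul]
  rw [l1_eq_range _ N hdP]
  have hle : ∀ k ∈ Finset.range N,
      ‖α‖ * ‖q.coeff k‖ - ‖(X * q).coeff k‖ ≤ ‖((X - C α) * q).coeff k‖ := by
    intro k _
    rw [hcoeff k, ← norm_mul]
    have h := norm_sub_norm_le (α * q.coeff k) ((X * q).coeff k)
    have h2 := norm_sub_rev (α * q.coeff k) ((X * q).coeff k)
    linarith
  have hsum : (‖α‖ - 1) * l1 q = ∑ j ∈ Finset.range N, (‖α‖ * ‖q.coeff j‖ - ‖(X * q).coeff j‖) := by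
    rw [Finset.sum_sub_distrib, ← Finset.mul_sum, ← l1_eq_range q N hdq,
      ← l1_eq_range (X * q) N hdXq, l1_X_mul]
    ring
  rw [hsum]
  exact Finset.sum_le_sum hle

lemma peel {n : ℕ} (r : Fin n → ℂ) (S : Finset (Fin n)) (hS : ∀ i ∈ S, 2 ≤ ‖r i‖)
    (g : Polynomial ℂ) :
    (∏ i ∈ S, (‖r i‖ - 1)) * l1 g ≤ l1 ((∏ i ∈ S, (X - C (r i))) * g) := by
  induction S using Finset.induction with
  | empty => simp
  | @insert a S ha ih =>
    have h2a : 2 ≤ ‖r a‖ := hS a (Finset.mem_insert_self a S)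
    have hrest : ∀ i ∈ S, 2 ≤ ‖r i‖ := fun i hi => hS i (Finset.mem_insert_of_mem hi)
    rw [Finset.prod_insert ha, Finset.prod_insert ha, mul_assoc, mul_assoc]
    calc (‖r a‖ - 1) * ((∏ i ∈ S, (‖r i‖ - 1)) * l1 g)
        ≤ (‖r a‖ - 1) * l1 ((∏ i ∈ S, (X - C (r i))) * g) := by
          apply mul_le_mul_of_nonneg_left (ih hrest) (by linarith)
      _ ≤ l1 ((X - C (r a)) * ((∏ i ∈ S, (X - C (r i))) * g)) := key_step _ _

lemma list_prod_X_sub_C (l : List ℂ) :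
    (l.map (fun a => X - C a)).prod = ∏ i : Fin l.length, (X - C (l.get i)) := by
  conv_lhs => rw [← List.ofFn_get l]
  rw [List.map_ofFn]
  rw [List.prod_ofFn]
  rfl

/-- A complex polynomial `p` of degree `n ≥ 1` factors as `sgn(a_n) · u_1 ⋯ u_n`
with linear factors whose 1-norms are bounded by `6 n T`, `T = max{|||p|||₁, 1}`. -/
theorem stmt_2 (p : Polynomial ℂ) (n : ℕ) (hn : 1 ≤ n) (hdeg : p.natDegree = n) :
    ∃ u : Fin n → Polynomial ℂ,
      (∀ i, (u i).degree ≤ 1) ∧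
      p = Polynomial.C (p.leadingCoeff / (‖p.leadingCoeff‖ : ℂ)) * ∏ i, u i ∧
      ∀ i, ∑ j ∈ (u i).support, ‖(u i).coeff j‖ ≤
        6 * n * max (∑ j ∈ p.support, ‖p.coeff j‖) 1 := by
  have hp0 : p ≠ 0 := fun h => by simp [h] at hdeg; omega
  have hlc : p.leadingCoeff ≠ 0 := leadingCoeff_ne_zero.mpr hp0
  have hlcn : (0:ℝ) < ‖p.leadingCoeff‖ := norm_pos_iff.mpr hlc
  -- roots
  have hcard0 : p.roots.card = p.natDegree :=
    splits_iff_card_roots.mp (IsAlgClosed.splits p)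
  have hcard : p.roots.card = n := by rw [hcard0, hdeg]
  set l : List ℂ := p.roots.toList with hl
  have hlen : l.length = n := by rw [hl, Multiset.length_toList, hcard]
  set r : Fin n → ℂ := fun i => l.get (Fin.cast hlen.symm i) with hr
  have hprod : (p.roots.map fun a => X - C a).prod = ∏ i, (X - C (r i)) := by
    conv_lhs => rw [← Multiset.coe_toList p.roots]
    rw [Multiset.map_coe, Multiset.prod_coe, ← hl, list_prod_X_sub_C l]
    exact Fintype.prod_equiv (finCongr hlen) _ _ (fun i => rfl)
  have hfact : p = C p.leadingCoeff * ∏ i, (X - C (r i)) := by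
    rw [← hprod]
    exact (C_leadingCoeff_mul_prod_multiset_X_sub_C hcard0).symm
  -- weights
  set b : Fin n → ℝ := fun i => max (‖r i‖ - 1) 1 with hb
  have hb1 : ∀ i, 1 ≤ b i := fun i => le_max_right _ _
  have hbpos : ∀ i, 0 < b i := fun i => lt_of_lt_of_le one_pos (hb1 i)
  set T : ℝ := max (∑ j ∈ p.support, ‖p.coeff j‖) 1 with hT
  have hT1 : 1 ≤ T := le_max_right _ _
  have hl1T : l1 p ≤ T := le_max_left _ _
  set P : ℝ := ‖p.leadingCoeff‖ * ∏ i, b i with hP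
  have hPpos : 0 < P := mul_pos hlcn (Finset.prod_pos fun i _ => hbpos i)
  -- P ≤ l1 p ≤ T
  have hPle : P ≤ T := by
    set L : Finset (Fin n) := Finset.univ.filter (fun i => 2 ≤ ‖r i‖) with hLdef
    have hbL : ∀ i ∈ L, b i = ‖r i‖ - 1 := by
      intro i hi
      have : 2 ≤ ‖r i‖ := (Finset.mem_filter.mp hi).2
      exact max_eq_left (by linarith)
    have hbLc : ∀ i ∈ Lᶜ, b i = 1 := by
      intro i hi
      have : ¬ 2 ≤ ‖r i‖ := by simpa [hLdef] using hi
      exact max_eq_right (by linarith)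
    have hsplit : (∏ i, b i) = ∏ i ∈ L, (‖r i‖ - 1) := by
      rw [← Finset.prod_mul_prod_compl L]
      rw [Finset.prod_congr rfl hbL, Finset.prod_congr rfl hbLc]
      simp
    set g : Polynomial ℂ := C p.leadingCoeff * ∏ i ∈ Lᶜ, (X - C (r i)) with hg
    have hg0 : g ≠ 0 := by
      apply mul_ne_zero (by simpa using hlc)
      exact (monic_prod_of_monic _ _ fun i _ => monic_X_sub_C (r i)).ne_zero
    have hglc : g.leadingCoeff = p.leadingCoeff := by
      rw [hg, leadingCoeff_mul, leadingCoeff_C,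
        (monic_prod_of_monic _ _ fun i _ => monic_X_sub_C (r i)).leadingCoeff, mul_one]
    have hpg : p = (∏ i ∈ L, (X - C (r i))) * g := by
      rw [hfact, hg, ← Finset.prod_mul_prod_compl L fun i => (X - C (r i))]
      ring
    have hpeel := peel r L (fun i hi => (Finset.mem_filter.mp hi).2) g
    rw [← hpg] at hpeel
    have hgl : ‖p.leadingCoeff‖ ≤ l1 g := by
      rw [← hglc]; exact norm_leadingCoeff_le_l1 g hg0
    have hLnn : (0:ℝ) ≤ ∏ i ∈ L, (‖r i‖ - 1) := by
      apply Finset.prod_nonneg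
      intro i hi
      have : 2 ≤ ‖r i‖ := (Finset.mem_filter.mp hi).2
      linarith
    calc P = (∏ i ∈ L, (‖r i‖ - 1)) * ‖p.leadingCoeff‖ := by rw [hP, hsplit]; ring
      _ ≤ (∏ i ∈ L, (‖r i‖ - 1)) * l1 g := mul_le_mul_of_nonneg_left hgl hLnn
      _ ≤ l1 p := hpeel
      _ ≤ T := hl1T
  -- define t and c
  set t : ℝ := P ^ ((1:ℝ)/n) with ht
  have htpos : 0 < t := Real.rpow_pos_of_pos hPpos _
  have hnne : (n:ℝ) ≠ 0 := Nat.cast_ne_zero.mpr (by omega)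
  have htn : t ^ (n:ℕ) = P := by
    rw [ht, ← Real.rpow_natCast (P ^ ((1:ℝ)/n)) n, ← Real.rpow_mul hPpos.le,
      one_div_mul_cancel hnne, Real.rpow_one]
  have htT : t ≤ T := by
    calc t ≤ T ^ ((1:ℝ)/n) := Real.rpow_le_rpow hPpos.le hPle (by positivity)
      _ ≤ T ^ (1:ℝ) := by
          apply Real.rpow_le_rpow_of_exponent_le hT1
          rw [div_le_one (by positivity)]
          exact_mod_cast hn
      _ = T := Real.rpow_one T
  set c : Fin n → ℝ := fun i => t / b i with hc
  have hcpos : ∀ i, 0 < c i := fun i => div_pos htpos (hbpos i)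
  have hcprod : ∏ i, c i = ‖p.leadingCoeff‖ := by
    rw [hc, Finset.prod_div_distrib, Finset.prod_const, Finset.card_univ,
      Fintype.card_fin, htn, hP]
    field_simp [(Finset.prod_pos fun i _ => hbpos i).ne']
  refine ⟨fun i => C (c i : ℂ) * (X - C (r i)), ?_, ?_, ?_⟩
  · intro i
    calc (C (c i : ℂ) * (X - C (r i))).degree ≤ (C (c i : ℂ)).degree + (X - C (r i)).degree :=
          degree_mul_le _ _
      _ ≤ 0 + 1 := add_le_add degree_C_le (degree_X_sub_C (r i)).le
      _ = 1 := by rfl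
  · rw [Finset.prod_mul_distrib, ← map_prod]
    have hcc : (∏ i, (c i : ℂ)) = (‖p.leadingCoeff‖ : ℂ) := by
      rw [← Complex.ofReal_prod, hcprod]
    rw [hcc, ← mul_assoc, ← map_mul, div_mul_cancel₀]
    · exact hfact
    · exact_mod_cast hlcn.ne'
  · intro i
    have hexp : C (c i : ℂ) * (X - C (r i)) = C (c i : ℂ) * X - C ((c i : ℂ) * r i) := by
      rw [mul_sub, ← C_mul]
    have hdle : (C (c i : ℂ) * (X - C (r i))).natDegree < 2 := by
      have h1 := natDegree_mul_le (p := C (c i : ℂ)) (q := X - C (r i))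
      simp [natDegree_X_sub_C] at h1
      omega
    have hl1u : (∑ j ∈ (C (c i : ℂ) * (X - C (r i))).support,
        ‖(C (c i : ℂ) * (X - C (r i))).coeff j‖) = c i * (1 + ‖r i‖) := by
      have h0 := l1_eq_range (C (c i : ℂ) * (X - C (r i))) 2 hdle
      rw [l1] at h0
      rw [h0, Finset.sum_range_succ, Finset.sum_range_one, hexp]
      simp only [coeff_sub, coeff_C_mul, coeff_X_zero, coeff_X_one, coeff_C]
      simp [norm_mul, Complex.norm_real, abs_of_pos (hcpos i)]
      ring
    rw [hl1u]
    have hb3 : 1 + ‖r i‖ ≤ 3 * b i := by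
      rcases le_total (‖r i‖) 2 with h | h
      · have h1 : 1 ≤ b i := hb1 i
        linarith
      · have h1 : ‖r i‖ - 1 ≤ b i := le_max_left _ _
        linarith
    have hstep : c i * (1 + ‖r i‖) ≤ 3 * t := by
      rw [hc, div_mul_eq_mul_div, div_le_iff₀ (hbpos i)]
      calc t * (1 + ‖r i‖) ≤ t * (3 * b i) := mul_le_mul_of_nonneg_left hb3 htpos.le
        _ = 3 * t * b i := by ring
    have hn1 : (1:ℝ) ≤ n := by exact_mod_cast hn
    calc c i * (1 + ‖r i‖) ≤ 3 * t := hstep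
      _ ≤ 3 * T := by linarith
      _ ≤ 6 * n * T := by nlinarith [hT1]
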